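/- arXiv:1801.05625 — 3 statements merged into one kernel-verified Lean document; each statement's English description precedes it below -/
import Mathlib

section
/- Let {R_n} be defined by R_0(λ)=1, R_1(λ)=λ+1, and R_{n+1}(λ)=(λ+1)R_n(λ)−4d_{n+1}λ R_{n−1}(λ) for n≥1, where d_{n+1}=(1−m_n)m_{n+1} with 0<m_n<1 for all n≥1. Then each R_n is a monic polynomial of degree n, R_n(1)≠0, R_n(−1)=0 if and only if n is odd, and R_n satisfies the self-inversive property λ^n R_n(1/λ) = R_n(λ) for λ≠0. -/
open Polynomial

/-- Properties of the para-orthogonal-type polynomials generated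
by the chain-sequence recurrence. -/
theorem stmt5 (d m : ℕ → ℝ) (R : ℕ → Polynomial ℝ)
    (hm : ∀ n, 1 ≤ n → 0 < m n ∧ m n < 1)
    (hd : ∀ n, 1 ≤ n → d (n + 1) = (1 - m n) * m (n + 1))
    (hR0 : R 0 = 1) (hR1 : R 1 = X + 1)
    (hrec : ∀ n, 1 ≤ n →
      R (n + 1) = (X + 1) * R n - C (4 * d (n + 1)) * (X * R (n - 1))) :
    ∀ n, (R n).Monic ∧ (R n).natDegree = n ∧ (R n).eval 1 ≠ 0 ∧
      ((R n).eval (-1) = 0 ↔ Odd n) ∧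
      ∀ lam : ℝ, lam ≠ 0 → lam ^ n * (R n).eval (1 / lam) = (R n).eval lam := by
  set P : ℕ → Prop := fun n =>
    (R n).Monic ∧ (R n).natDegree = n ∧ 0 < (R n).eval 1 ∧
    (1 ≤ n → 2 * (1 - m n) * (R (n - 1)).eval 1 < (R n).eval 1) ∧
    (Odd n → (R n).eval (-1) = 0) ∧ (Even n → 0 < (R n).eval (-1)) ∧
    (∀ lam : ℝ, lam ≠ 0 → lam ^ n * (R n).eval (1 / lam) = (R n).eval lam)
    with hP
  have hXadd : (X + 1 : ℝ[X]).Monic := by simpa using monic_X_add_C (1 : ℝ)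
  have key : ∀ n, P n ∧ P (n + 1) := by
    intro n
    induction n with
    | zero =>
      constructor
      · refine ⟨?_, ?_, ?_, ?_, ?_, ?_, ?_⟩ <;> simp [hP, hR0]
      · refine ⟨?_, ?_, ?_, ?_, ?_, ?_, ?_⟩
        · simpa [hR1] using hXadd
        · rw [hR1]; simpa using natDegree_X_add_C (1 : ℝ)
        · norm_num [hR1]
        · intro _
          have h1 := hm 1 le_rfl
          simp only [hR1, hR0]
          norm_num
          nlinarith [h1.1]
        · intro _; simp [hR1]
        · intro h; simp at h
        · intro lam hlam
          simp only [hR1]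
          field_simp
          simp only [eval_add, eval_one, eval_X, zero_add, pow_one, one_div, mul_add, mul_inv_cancel₀ hlam, mul_one]; ring
    | succ n ih =>
      obtain ⟨hn, hn1⟩ := ih
      refine ⟨hn1, ?_⟩
      obtain ⟨mon0, deg0, pos0, gap0, odd0, even0, inv0⟩ := hn
      obtain ⟨mon1, deg1, pos1, gap1, odd1, even1, inv1⟩ := hn1
      have hrec2 : R (n + 2) = (X + 1) * R (n + 1) - C (4 * d (n + 2)) * (X * R n) := by
        simpa using hrec (n + 1) (by omega)
      have hdval : d (n + 2) = (1 - m (n + 1)) * m (n + 2) := hd (n + 1) (by omega)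
      have hm1 := hm (n + 1) (by omega)
      have hm2 := hm (n + 2) (by omega)
      have hdpos : 0 < d (n + 2) := by rw [hdval]; nlinarith [hm1.2, hm2.1]
      have heval : ∀ x : ℝ, (R (n + 2)).eval x =
          (x + 1) * (R (n + 1)).eval x - (4 * d (n + 2)) * (x * (R n).eval x) := by
        intro x; rw [hrec2]; simp
      -- degree facts
      have hmul : ((X + 1 : ℝ[X]) * R (n + 1)).Monic := hXadd.mul mon1
      have hX1deg : (X + 1 : ℝ[X]).natDegree = 1 := by
        simpa using natDegree_X_add_C (1 : ℝ)
      have hnatmul : ((X + 1 : ℝ[X]) * R (n + 1)).natDegree = n + 2 := by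
        rw [hXadd.natDegree_mul mon1, hX1deg, deg1]; omega
      have hdegmul : ((X + 1 : ℝ[X]) * R (n + 1)).degree = ((n + 2 : ℕ) : WithBot ℕ) := by
        rw [degree_eq_natDegree hmul.ne_zero, hnatmul]
      have hdR : (R n).degree = (n : WithBot ℕ) := by
        rw [degree_eq_natDegree mon0.ne_zero, deg0]
      have hq : (C (4 * d (n + 2)) * (X * R n)).degree ≤ ((n + 1 : ℕ) : WithBot ℕ) := by
        refine le_trans (degree_mul_le _ _) ?_
        refine le_trans (add_le_add degree_C_le (degree_mul_le _ _)) ?_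
        rw [degree_X, hdR, zero_add]
        exact_mod_cast le_of_eq (add_comm 1 n)
      have hqlt : (C (4 * d (n + 2)) * (X * R n)).degree < ((X + 1 : ℝ[X]) * R (n + 1)).degree := by
        rw [hdegmul]
        refine lt_of_le_of_lt hq ?_
        exact_mod_cast Nat.lt_succ_self (n + 1)
      have mon2 : (R (n + 2)).Monic := by
        rw [hrec2, sub_eq_add_neg]
        exact hmul.add_of_left (by rwa [degree_neg])
      have hdeg2 : (R (n + 2)).degree = ((n + 2 : ℕ) : WithBot ℕ) := by
        rw [hrec2, degree_sub_eq_left_of_degree_lt hqlt, hdegmul]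
      have deg2 : (R (n + 2)).natDegree = n + 2 := natDegree_eq_of_degree_eq_some hdeg2
      -- positivity at 1
      have gapn1 : 2 * (1 - m (n + 1)) * (R n).eval 1 < (R (n + 1)).eval 1 := by
        simpa using gap1 (by omega)
      have heval1 : (R (n + 2)).eval 1 =
          2 * (R (n + 1)).eval 1 - 4 * d (n + 2) * (R n).eval 1 := by
        rw [heval 1]; ring
      have gap2 : 2 * (1 - m (n + 2)) * (R (n + 1)).eval 1 < (R (n + 2)).eval 1 := by
        rw [heval1, hdval]
        nlinarith [mul_pos hm2.1 (sub_pos.mpr gapn1)]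
      have pos2 : 0 < (R (n + 2)).eval 1 := by
        nlinarith [gap2, pos1, hm2.2]
      -- parity at -1
      have hevalm1 : (R (n + 2)).eval (-1) = 4 * d (n + 2) * (R n).eval (-1) := by
        rw [heval (-1)]; ring
      refine ⟨mon2, deg2, pos2, fun _ => by simpa using gap2, ?_, ?_, ?_⟩
      · rintro ⟨k, hk⟩
        have : (R n).eval (-1) = 0 := odd0 ⟨k - 1, by omega⟩
        rw [hevalm1, this, mul_zero]
      · rintro ⟨k, hk⟩
        have : 0 < (R n).eval (-1) := even0 ⟨k - 1, by omega⟩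
        rw [hevalm1]; positivity
      -- self-inversive
      · intro lam hlam
        rw [heval lam, heval (1 / lam)]
        have h0 := inv0 lam hlam
        have h1 := inv1 lam hlam
        calc lam ^ (n + 2) * ((1 / lam + 1) * (R (n + 1)).eval (1 / lam) -
              4 * d (n + 2) * (1 / lam * (R n).eval (1 / lam)))
            = (lam + 1) * (lam ^ (n + 1) * (R (n + 1)).eval (1 / lam)) -
              4 * d (n + 2) * (lam * (lam ^ n * (R n).eval (1 / lam))) := by
              field_simp; ring
          _ = (lam + 1) * (R (n + 1)).eval lam -
              4 * d (n + 2) * (lam * (R n).eval lam) := by rw [h0, h1]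
  intro n
  obtain ⟨⟨mon, deg, pos, gap, hodd, heven, hinv⟩, _⟩ := key n
  refine ⟨mon, deg, ne_of_gt pos, ⟨?_, hodd⟩, hinv⟩
  intro h
  rcases Nat.even_or_odd n with he | ho
  · exact absurd h (ne_of_gt (heven he))
  · exact ho
end

section
/- Let R_0(λ)=1, R_1(λ)=λ+1, R_{n+1}(λ)=(λ+1)R_n(λ)−4d_{n+1}λR_{n−1}(λ), with d_{n+1}=(1−m_n)m_{n+1}, 0<m_n<1. Then all zeros of R_n lie on the unit circle |λ|=1 and are simple. -/
open Polynomial Finset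

noncomputable def sp (d : ℕ → ℝ) : ℕ → Polynomial ℝ
  | 0 => 1
  | 1 => C 2 * X
  | (n+2) => C 2 * X * sp d (n+1) - C (4 * d (n+2)) * sp d n

lemma sp_rec (d : ℕ → ℝ) (n : ℕ) :
    sp d (n+2) = C 2 * X * sp d (n+1) - C (4 * d (n+2)) * sp d n := rfl

lemma sp_deg (d : ℕ → ℝ) : ∀ n, (sp d n).natDegree ≤ n ∧ (sp d n).coeff n = 2^n := by
  have key : ∀ n, ((sp d n).natDegree ≤ n ∧ (sp d n).coeff n = 2^n) ∧
      ((sp d (n+1)).natDegree ≤ n+1 ∧ (sp d (n+1)).coeff (n+1) = 2^(n+1)) := by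
    intro n
    induction n with
    | zero =>
      refine ⟨⟨?_, ?_⟩, ?_, ?_⟩ <;> simp [sp, coeff_one]
    | succ n ih =>
      obtain ⟨⟨hd1, hc1⟩, hd2, hc2⟩ := ih
      refine ⟨⟨hd2, hc2⟩, ?_, ?_⟩
      · rw [show n+1+1 = n+2 from rfl, sp_rec]
        refine le_trans (natDegree_sub_le _ _) (max_le ?_ ?_)
        · refine le_trans (natDegree_mul_le) ?_
          have : (C (2:ℝ) * X).natDegree ≤ 1 := le_trans natDegree_mul_le (by simp)
          omega
        · refine le_trans (natDegree_mul_le) ?_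
          have : (C (4 * d (n+2))).natDegree = 0 := natDegree_C _
          omega
      · rw [show n+1+1 = n+2 from rfl, sp_rec]
        have h1 : (sp d n).coeff (n+2) = 0 :=
          coeff_eq_zero_of_natDegree_lt (by omega)
        rw [coeff_sub, mul_assoc, coeff_C_mul, coeff_X_mul, hc2, coeff_C_mul, h1]
        ring
  exact fun n => (key n).1

lemma sp_natDegree (d : ℕ → ℝ) (n : ℕ) : (sp d n).natDegree = n := by
  have h := sp_deg d n
  have : (sp d n).coeff n ≠ 0 := by rw [h.2]; positivity
  exact le_antisymm h.1 (le_natDegree_of_ne_zero this)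

lemma sp_leadingCoeff (d : ℕ → ℝ) (n : ℕ) : (sp d n).leadingCoeff = 2^n := by
  rw [leadingCoeff, sp_natDegree, (sp_deg d n).2]


lemma factor_of_roots {F : Type*} [Field F] (q : Polynomial F) (N : ℕ) (z : ℕ → F)
    (hdeg : q.natDegree = N) (hq : q ≠ 0) (hroot : ∀ i < N, q.eval (z i) = 0)
    (hinj : ∀ i < N, ∀ j < N, z i = z j → i = j) :
    q = C q.leadingCoeff * ∏ i ∈ Finset.range N, (X - C (z i)) := by
  classical
  set P := ∏ i ∈ Finset.range N, (X - C (z i)) with hP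
  have hPmonic : P.Monic := monic_prod_of_monic _ _ (fun i _ => monic_X_sub_C (z i))
  have hPdeg : P.natDegree = N := by
    rw [hP, natDegree_prod _ _ (fun i _ => X_sub_C_ne_zero (z i))]
    simp
  set r := q - C q.leadingCoeff * P with hr
  have hrdegle : r.natDegree ≤ N := by
    refine le_trans (natDegree_sub_le _ _) (max_le (le_of_eq hdeg) ?_)
    refine le_trans natDegree_mul_le ?_
    simp [hPdeg]
  have hrcoeff : r.coeff N = 0 := by
    have h1 : q.coeff N = q.leadingCoeff := by rw [← hdeg]; rfl
    have h2 : P.coeff N = 1 := by rw [← hPdeg]; exact hPmonic.coeff_natDegree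
    simp [hr, h1, h2]
  have hrz : r = 0 := by
    by_cases hN : N = 0
    · subst hN
      have : r.natDegree = 0 := le_antisymm hrdegle (Nat.zero_le _)
      have := Polynomial.eq_C_of_natDegree_eq_zero this
      rw [this, hrcoeff, map_zero]
    · have hrdeg : r.natDegree < N := by
        rcases lt_or_eq_of_le hrdegle with h | h
        · exact h
        · by_cases hr0 : r = 0
          · rw [hr0]; simpa [hr0] using Nat.pos_of_ne_zero hN
          · exfalso
            have : r.leadingCoeff = 0 := by rw [leadingCoeff, h, hrcoeff]
            exact hr0 (leadingCoeff_eq_zero.mp this)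
      refine eq_zero_of_natDegree_lt_card_of_eval_eq_zero' r ((Finset.range N).image z) ?_ ?_
      · intro w hw
        obtain ⟨i, hi, rfl⟩ := Finset.mem_image.mp hw
        rw [Finset.mem_range] at hi
        have hPz : P.eval (z i) = 0 := by
          rw [hP, eval_prod]
          exact Finset.prod_eq_zero (Finset.mem_range.mpr hi) (by simp)
        simp [hr, hroot i hi, hPz]
      · rwa [Finset.card_image_of_injOn (fun i hi j hj hij =>
          hinj i (Finset.mem_range.mp hi) j (Finset.mem_range.mp hj) hij), Finset.card_range]
  have : q - C q.leadingCoeff * P = 0 := hrz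
  linear_combination this

lemma sign_prod (n i : ℕ) (hi : i ≤ n) (x : ℕ → ℝ) (t : ℝ)
    (h1 : ∀ j, j < i → t < x j) (h2 : ∀ j, i ≤ j → j < n → x j < t) :
    0 < (-1:ℝ)^i * ∏ j ∈ Finset.range n, (t - x j) := by
  have key : (-1:ℝ)^i * ∏ j ∈ Finset.range n, (t - x j)
      = ∏ j ∈ Finset.range n, ((if j < i then (-1:ℝ) else 1) * (t - x j)) := by
    rw [Finset.prod_mul_distrib]
    congr 1
    rw [Finset.prod_ite, Finset.prod_const, Finset.prod_const, one_pow, mul_one]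
    congr 1
    have : Finset.filter (fun j => j < i) (Finset.range n) = Finset.range i := by
      ext j; simp only [Finset.mem_filter, Finset.mem_range]; omega
    rw [this, Finset.card_range]
  rw [key]
  refine Finset.prod_pos ?_
  intro j hj
  rw [Finset.mem_range] at hj
  by_cases h : j < i
  · simp only [h, if_pos]
    have := h1 j h
    nlinarith
  · simp only [h, if_neg, not_false_iff, one_mul]
    have := h2 j (by omega) hj
    linarith

lemma root_between (q : Polynomial ℝ) {a b : ℝ} (hab : a < b) (h : q.eval a * q.eval b < 0) :
    ∃ c, a < c ∧ c < b ∧ q.eval c = 0 := by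
  have hc : ContinuousOn (fun t => q.eval t) (Set.Icc a b) :=
    (Polynomial.continuous q).continuousOn
  rcases lt_or_ge (q.eval a) 0 with ha | ha
  · have hb : 0 < q.eval b := by nlinarith
    have := intermediate_value_Ioo (le_of_lt hab) hc
    have h0 : (0:ℝ) ∈ Set.Ioo (q.eval a) (q.eval b) := ⟨ha, hb⟩
    obtain ⟨c, hc1, hc2⟩ := this h0
    exact ⟨c, hc1.1, hc1.2, hc2⟩
  · have hb : q.eval b < 0 := by nlinarith [lt_of_le_of_ne ha (by rintro h0; rw [← h0] at h; simp at h)]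
    have := intermediate_value_Ioo' (le_of_lt hab) hc
    have h0 : (0:ℝ) ∈ Set.Ioo (q.eval b) (q.eval a) := by
      constructor
      · exact hb
      · nlinarith
    obtain ⟨c, hc1, hc2⟩ := this h0
    exact ⟨c, hc1.1, hc1.2, hc2⟩

lemma sign_mul_alt (k : ℕ) (a b : ℝ) (h1 : 0 < (-1:ℝ)^k * a) (h2 : 0 < (-1:ℝ)^(k+1) * b) :
    a * b < 0 := by
  have h := mul_pos h1 h2
  have he : (-1:ℝ)^k * (-1:ℝ)^k = 1 := by
    rw [← pow_add]; exact Even.neg_one_pow ⟨k, rfl⟩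
  have : (-1:ℝ)^k * a * ((-1:ℝ)^(k+1) * b) = -(a*b) := by
    rw [pow_succ]; linear_combination (-(a*b)) * he
  linarith [this ▸ h]


lemma step_anti (f : ℕ → ℝ) (N : ℕ) (h : ∀ i, i+1 < N → f (i+1) < f i) :
    ∀ i j, i < j → j < N → f j < f i := by
  intro i j hij hjN
  induction j with
  | zero => omega
  | succ j ih =>
    rcases Nat.lt_or_ge i j with h' | h'
    · exact lt_trans (h j hjN) (ih h' (by omega))
    · have : i = j := by omega
      subst this
      exact h i hjN

section evals
variable (d m : ℕ → ℝ)
    (hm : ∀ n, 1 ≤ n → 0 < m n ∧ m n < 1)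
    (hd : ∀ n, 1 ≤ n → d (n + 1) = (1 - m n) * m (n + 1))

include hm hd in
lemma sp_eval_one : ∀ n, 1 ≤ n → ∃ g : ℝ, 0 ≤ g ∧ g < m n ∧
    0 < (sp d (n-1)).eval 1 ∧ (sp d n).eval 1 = 2*(1-g) * (sp d (n-1)).eval 1 := by
  intro n hn
  induction n, hn using Nat.le_induction with
  | base =>
    refine ⟨0, le_refl _, (hm 1 le_rfl).1, ?_, ?_⟩ <;> simp [sp]
  | succ n hn ih =>
    obtain ⟨g, hg0, hgm, hpos, heq⟩ := ih
    have hmn := hm n hn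
    have hmn1 := hm (n+1) (by omega)
    have hg1 : (0:ℝ) < 1 - g := by linarith
    refine ⟨(1 - m n) * m (n+1) / (1 - g), ?_, ?_, ?_, ?_⟩
    · apply div_nonneg _ (le_of_lt hg1)
      nlinarith [hmn.1, hmn.2, hmn1.1]
    · rw [div_lt_iff₀ hg1]
      have : 1 - g > 1 - m n := by linarith
      nlinarith
    · show 0 < (sp d n).eval 1
      nlinarith [heq]
    · have hrec : sp d (n+1) = C 2 * X * sp d n - C (4 * d (n+1)) * sp d (n-1) := by
        obtain ⟨k, rfl⟩ : ∃ k, n = k + 1 := ⟨n - 1, by omega⟩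
        exact sp_rec d k
      have hd' := hd n hn
      have hEn : (sp d n).eval 1 = 2*(1-g) * (sp d (n-1)).eval 1 := heq
      show (sp d (n+1)).eval 1 = _
      simp only [Nat.add_sub_cancel]
      rw [hrec]
      simp only [eval_sub, eval_mul, eval_C, eval_X, mul_one]
      rw [hd']
      have hdiv : (sp d n).eval 1 / (1-g) = 2 * (sp d (n-1)).eval 1 := by
        rw [hEn]; field_simp
      linear_combination (2*(1-m n)*m (n+1)) * hdiv

include hm hd in
lemma sp_one_pos : ∀ n, 0 < (sp d n).eval 1 := by
  intro n
  rcases Nat.eq_zero_or_pos n with rfl | hn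
  · simp [sp]
  · obtain ⟨g, hg0, hgm, hpos, heq⟩ := sp_eval_one d m hm hd n hn
    have := (hm n hn).2
    rw [heq]; nlinarith

lemma sp_neg_one (n : ℕ) : (sp d n).eval (-1) = (-1)^n * (sp d n).eval 1 := by
  have key : ∀ k, ((sp d k).eval (-1) = (-1)^k * (sp d k).eval 1) ∧
      ((sp d (k+1)).eval (-1) = (-1)^(k+1) * (sp d (k+1)).eval 1) := by
    intro k
    induction k with
    | zero => constructor <;> simp [sp]
    | succ k ih =>
      obtain ⟨h1, h2⟩ := ih
      refine ⟨h2, ?_⟩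
      rw [show k + 1 + 1 = k + 2 from rfl, sp_rec]
      simp only [eval_sub, eval_mul, eval_C, eval_X]
      rw [h1, h2, pow_succ, pow_succ]
      ring
  exact (key n).1

include hm hd in
lemma sp_pair : ∀ n : ℕ, ∃ x y : ℕ → ℝ,
    (∀ i, i < n → -1 < x i ∧ x i < 1) ∧
    (∀ i, i < n+1 → -1 < y i ∧ y i < 1) ∧
    (∀ i, i < n → x i < y i ∧ y (i+1) < x i) ∧
    sp d n = C ((2:ℝ)^n) * ∏ i ∈ Finset.range n, (X - C (x i)) ∧
    sp d (n+1) = C ((2:ℝ)^(n+1)) * ∏ i ∈ Finset.range (n+1), (X - C (y i)) := by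
  intro n
  induction n with
  | zero =>
    refine ⟨fun _ => 0, fun _ => 0, by omega, ?_, by omega, ?_, ?_⟩
    · intro i hi
      norm_num
    · show sp d 0 = _
      simp [sp]
    · show sp d 1 = _
      simp [sp, Finset.prod_range_one]
  | succ n ih =>
    obtain ⟨x, y, hxb, hyb, hxy, hfx, hfy⟩ := ih
    -- y is strictly decreasing on 0..n
    have ymono : ∀ i j, i < j → j < n+1 → y j < y i := by
      refine step_anti y (n+1) ?_
      intro i hi
      exact lt_trans (hxy i (by omega)).2 (hxy i (by omega)).1
    -- roots of sp (n+1)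
    have hyroot : ∀ i, i < n+1 → (sp d (n+1)).eval (y i) = 0 := by
      intro i hi
      rw [hfy, eval_mul, eval_prod]
      refine mul_eq_zero_of_right _ (Finset.prod_eq_zero (Finset.mem_range.mpr hi) ?_)
      simp
    -- sign of sp n at y i
    have hsign_n : ∀ i, i < n+1 → 0 < (-1:ℝ)^i * (sp d n).eval (y i) := by
      intro i hi
      rw [hfx, eval_mul, eval_prod, eval_C]
      simp only [eval_sub, eval_X, eval_C]
      have hs : 0 < (-1:ℝ)^i * ∏ j ∈ Finset.range n, (y i - x j) := by
        refine sign_prod n i (by omega) x (y i) ?_ ?_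
        · intro j hj
          have h1 : y i ≤ y (j+1) := by
            rcases Nat.lt_or_ge (j+1) i with h | h
            · exact le_of_lt (ymono (j+1) i h hi)
            · have : j + 1 = i := by omega
              rw [this]
          exact lt_of_le_of_lt h1 (hxy j (by omega)).2
        · intro j hij hj
          have h1 : y j ≤ y i := by
            rcases Nat.lt_or_ge i j with h | h
            · exact le_of_lt (ymono i j h (by omega))
            · have : i = j := by omega
              rw [this]
          exact lt_of_lt_of_le (hxy j hj).1 h1
      calc (0:ℝ) < (2:ℝ)^n * ((-1:ℝ)^i * ∏ j ∈ Finset.range n, (y i - x j)) := by positivity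
        _ = (-1:ℝ)^i * ((2:ℝ)^n * ∏ j ∈ Finset.range n, (y i - x j)) := by ring
    -- positivity of d (n+2)
    have hdpos : 0 < d (n+2) := by
      rw [hd (n+1) (by omega)]
      have h1 := hm (n+1) (by omega)
      have h2 := hm (n+2) (by omega)
      nlinarith
    -- sign of sp (n+2) at y i
    have hsign_n2 : ∀ i, i < n+1 → 0 < (-1:ℝ)^(i+1) * (sp d (n+2)).eval (y i) := by
      intro i hi
      rw [sp_rec]
      simp only [eval_sub, eval_mul, eval_C, eval_X]
      rw [hyroot i hi]
      have := hsign_n i hi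
      rw [pow_succ]
      nlinarith
    -- the grid
    set u : ℕ → ℝ := fun i => if i = 0 then 1 else if i ≤ n+1 then y (i-1) else -1 with hu
    have hu0 : u 0 = 1 := rfl
    have humid : ∀ i, 1 ≤ i → i ≤ n+1 → u i = y (i-1) := by
      intro i h1 h2
      simp only [hu]
      rw [if_neg (by omega), if_pos h2]
    have huend : u (n+2) = -1 := by
      simp only [hu]
      rw [if_neg (by omega), if_neg (by omega)]
    have hudec : ∀ i, i+1 < n+3 → u (i+1) < u i := by
      intro i hi
      rcases Nat.eq_zero_or_pos i with rfl | hipos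
      · rw [hu0, humid 1 le_rfl (by omega)]
        exact (hyb 0 (by omega)).2
      · rcases Nat.lt_or_ge (i+1) (n+2) with h | h
        · rw [humid i hipos (by omega), humid (i+1) (by omega) (by omega)]
          have : i - 1 + 1 = i := by omega
          rw [show i + 1 - 1 = i from rfl, ← this]
          exact ymono (i-1) (i-1+1) (by omega) (by omega)
        · have : i + 1 = n+2 := by omega
          rw [this, huend, humid i hipos (by omega)]
          exact (hyb (i-1) (by omega)).1
    have humono : ∀ i j, i < j → j < n+3 → u j < u i := step_anti u (n+3) hudec
    -- signs on the grid
    have husign : ∀ i, i ≤ n+2 → 0 < (-1:ℝ)^i * (sp d (n+2)).eval (u i) := by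
      intro i hi
      rcases Nat.eq_zero_or_pos i with rfl | hipos
      · rw [hu0, pow_zero, one_mul]
        exact sp_one_pos d m hm hd (n+2)
      · rcases Nat.lt_or_ge i (n+2) with h | h
        · rw [humid i hipos (by omega)]
          have := hsign_n2 (i-1) (by omega)
          rwa [show i - 1 + 1 = i from by omega] at this
        · have : i = n+2 := by omega
          subst this
          rw [huend, sp_neg_one]
          have h1 := sp_one_pos d m hm hd (n+2)
          have h2 : ((-1:ℝ)^(n+2))^2 = 1 := by
            rw [← pow_mul]
            exact Even.neg_one_pow ⟨n+2, by ring⟩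
          calc (0:ℝ) < ((-1:ℝ)^(n+2))^2 * (sp d (n+2)).eval 1 := by rw [h2]; linarith
            _ = (-1:ℝ)^(n+2) * ((-1:ℝ)^(n+2) * (sp d (n+2)).eval 1) := by ring
    -- find roots z between grid points
    have hex : ∀ i, ∃ c, i < n+2 → (u (i+1) < c ∧ c < u i ∧ (sp d (n+2)).eval c = 0) := by
      intro i
      by_cases hi : i < n+2
      · have hlt : u (i+1) < u i := hudec i (by omega)
        have hprod : (sp d (n+2)).eval (u (i+1)) * (sp d (n+2)).eval (u i) < 0 := by
          have := sign_mul_alt i ((sp d (n+2)).eval (u i)) ((sp d (n+2)).eval (u (i+1)))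
            (husign i (by omega)) (husign (i+1) (by omega))
          linarith [this, mul_comm ((sp d (n+2)).eval (u i)) ((sp d (n+2)).eval (u (i+1)))]
        obtain ⟨c, h1, h2, h3⟩ := root_between (sp d (n+2)) hlt hprod
        exact ⟨c, fun _ => ⟨h1, h2, h3⟩⟩
      · exact ⟨0, fun hc => absurd hc hi⟩
    choose z hz using hex
    -- z properties
    have hzdec : ∀ i, i+1 < n+2 → z (i+1) < z i := by
      intro i hi
      have h1 := hz i (by omega)
      have h2 := hz (i+1) hi
      exact lt_of_lt_of_le h2.2.1 (le_of_lt h1.1)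
    have hzmono : ∀ i j, i < j → j < n+2 → z j < z i := step_anti z (n+2) hzdec
    have hzb : ∀ i, i < n+2 → -1 < z i ∧ z i < 1 := by
      intro i hi
      obtain ⟨hlo, hhi, _⟩ := hz i hi
      constructor
      · calc (-1:ℝ) = u (n+2) := huend.symm
          _ ≤ u (i+1) := by
            rcases Nat.lt_or_ge (i+1) (n+2) with h | h
            · exact le_of_lt (humono (i+1) (n+2) h (by omega))
            · have : i + 1 = n + 2 := by omega
              rw [this]
          _ < z i := hlo
      · calc z i < u i := hhi
          _ ≤ u 0 := by
            rcases Nat.eq_zero_or_pos i with rfl | h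
            · exact le_refl _
            · exact le_of_lt (humono 0 i h (by omega))
          _ = 1 := hu0
    -- factorization of sp (n+2)
    have hfz : sp d (n+2) = C ((2:ℝ)^(n+2)) * ∏ i ∈ Finset.range (n+2), (X - C (z i)) := by
      have := factor_of_roots (sp d (n+2)) (n+2) z (sp_natDegree d (n+2))
        (by
          intro hc
          have := sp_leadingCoeff d (n+2)
          rw [hc] at this
          simp at this
          nlinarith [this, pow_pos (by norm_num : (0:ℝ) < 2) (n+2)])
        (fun i hi => (hz i hi).2.2)
        (by
          intro i hi j hj hij
          by_contra hne
          rcases Nat.lt_or_ge i j with h | h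
          · exact absurd hij (ne_of_gt (hzmono i j h hj))
          · exact absurd hij (ne_of_lt (hzmono j i (by omega) hi)))
      rwa [sp_leadingCoeff d (n+2)] at this
    -- assemble
    refine ⟨y, z, hyb, hzb, ?_, hfy, hfz⟩
    intro i hi
    constructor
    · have h2 := hz i (by omega)
      have h1 : u (i+1) = y i := humid (i+1) (by omega) (by omega)
      rw [← h1]
      exact h2.1
    · have h2 := hz (i+1) (by omega)
      have h1 : u (i+1) = y i := humid (i+1) (by omega) (by omega)
      rw [← h1]
      exact h2.2.1

end evals

section cx
variable (d : ℕ → ℝ) (R : ℕ → Polynomial ℂ)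
    (hR0 : R 0 = 1) (hR1 : R 1 = X + 1)
    (hrec : ∀ n, 1 ≤ n →
      R (n + 1) = (X + 1) * R n - C ((4 * d (n + 1) : ℝ) : ℂ) * (X * R (n - 1)))

include hR0 hR1 hrec in
lemma R_deg : ∀ n, (R n).natDegree ≤ n ∧ (R n).coeff n = 1 := by
  have key : ∀ n, ((R n).natDegree ≤ n ∧ (R n).coeff n = 1) ∧
      ((R (n+1)).natDegree ≤ n+1 ∧ (R (n+1)).coeff (n+1) = 1) := by
    intro n
    induction n with
    | zero =>
      refine ⟨⟨?_, ?_⟩, ?_, ?_⟩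
      · simp [hR0]
      · simp [hR0, coeff_one]
      · rw [hR1]
        exact le_trans (natDegree_add_le _ _) (by simp)
      · simp [hR1, coeff_one]
    | succ n ih =>
      obtain ⟨⟨hd1, hc1⟩, hd2, hc2⟩ := ih
      have hr : R (n+2) = (X+1) * R (n+1) - C ((4 * d (n+2) : ℝ) : ℂ) * (X * R n) := by
        have := hrec (n+1) (by omega)
        simpa using this
      refine ⟨⟨hd2, hc2⟩, ?_, ?_⟩
      · rw [show n+1+1 = n+2 from rfl, hr]
        refine le_trans (natDegree_sub_le _ _) (max_le ?_ ?_)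
        · refine le_trans natDegree_mul_le ?_
          have h1 : (X + 1 : Polynomial ℂ).natDegree ≤ 1 := le_trans (natDegree_add_le _ _) (by simp)
          omega
        · refine le_trans natDegree_mul_le ?_
          have h1 : (X * R n).natDegree ≤ 1 + n := le_trans natDegree_mul_le (by simp only [natDegree_X]; omega)
          have h2 : (C ((4 * d (n+2) : ℝ) : ℂ)).natDegree = 0 := natDegree_C _
          omega
      · rw [show n+1+1 = n+2 from rfl, hr]
        have h1 : (R (n+1)).coeff (n+2) = 0 := coeff_eq_zero_of_natDegree_lt (by omega)
        have h2 : (R n).coeff (n+1) = 0 := coeff_eq_zero_of_natDegree_lt (by omega)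
        rw [coeff_sub, add_mul, one_mul, coeff_add, coeff_X_mul, hc2, h1, coeff_C_mul,
          coeff_X_mul, h2]
        ring
  exact fun n => (key n).1

include hR0 hR1 hrec in
lemma transfer : ∀ n, ∀ z : ℂ, z ≠ 0 →
    (R n).eval (z^2) = z^n * (Polynomial.aeval ((z + z⁻¹)/2) (sp d n)) := by
  have key : ∀ n, ∀ z : ℂ, z ≠ 0 →
      ((R n).eval (z^2) = z^n * (Polynomial.aeval ((z + z⁻¹)/2) (sp d n)) ∧
       (R (n+1)).eval (z^2) = z^(n+1) * (Polynomial.aeval ((z + z⁻¹)/2) (sp d (n+1)))) := by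
    intro n
    induction n with
    | zero =>
      intro z hz
      constructor
      · simp [hR0, sp]
      · simp only [hR1, sp, eval_add, eval_X, eval_one, pow_one]
        rw [map_mul, aeval_C, aeval_X, map_ofNat]
        field_simp
        ring
    | succ n ih =>
      intro z hz
      obtain ⟨h1, h2⟩ := ih z hz
      refine ⟨h2, ?_⟩
      have hr : R (n+2) = (X+1) * R (n+1) - C ((4 * d (n+2) : ℝ) : ℂ) * (X * R n) := by
        have := hrec (n+1) (by omega)
        simpa using this
      have hs : (Polynomial.aeval ((z + z⁻¹)/2) (sp d (n+2)) : ℂ)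
          = 2 * ((z + z⁻¹)/2) * (Polynomial.aeval ((z + z⁻¹)/2) (sp d (n+1)))
            - ((4 * d (n+2) : ℝ) : ℂ) * (Polynomial.aeval ((z + z⁻¹)/2) (sp d n)) := by
        rw [sp_rec]
        simp only [map_sub, map_mul, aeval_C, aeval_X, Complex.coe_algebraMap]
        push_cast
        ring
      rw [show n+1+1 = n+2 from rfl, hr]
      simp only [eval_sub, eval_mul, eval_add, eval_X, eval_one, eval_C]
      rw [h1, h2, hs]
      field_simp
      ring
  intro n z hz
  exact (key n z hz).1

end cx


lemma winj_real (r r' s s' : ℝ) (hs : 0 < s) (hs' : 0 < s')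
    (h1 : s^2 = 1 - r^2) (h2 : s'^2 = 1 - r'^2)
    (heq : ((r:ℂ) + (s:ℂ)*Complex.I)^2 = ((r':ℂ) + (s':ℂ)*Complex.I)^2) : r = r' := by
  have e1 : ((r:ℂ) + (s:ℂ)*Complex.I)^2 = ((r^2 - s^2 : ℝ) : ℂ) + ((2*r*s : ℝ) : ℂ)*Complex.I := by
    push_cast
    linear_combination ((s:ℂ)^2) * Complex.I_sq
  have e2 : ((r':ℂ) + (s':ℂ)*Complex.I)^2 = ((r'^2 - s'^2 : ℝ) : ℂ) + ((2*r'*s' : ℝ) : ℂ)*Complex.I := by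
    push_cast
    linear_combination ((s':ℂ)^2) * Complex.I_sq
  rw [e1, e2] at heq
  have hre : r^2 - s^2 = r'^2 - s'^2 := by
    have h := congrArg Complex.re heq
    simpa [← Complex.ofReal_pow] using h
  have him : 2*r*s = 2*r'*s' := by
    have h := congrArg Complex.im heq
    simpa [← Complex.ofReal_pow] using h
  have h3 : (s - s')*(s + s') = 0 := by linear_combination h1/2 - h2/2 - hre/2
  have hss : s = s' := by
    rcases mul_eq_zero.mp h3 with h | h
    · linarith
    · linarith
  have h4 : r * s' = r' * s' := by rw [hss] at him; linarith
  exact mul_right_cancel₀ (ne_of_gt hs') h4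

/-- All zeros of the para-orthogonal polynomials `R_n` generated
by the chain-sequence recurrence lie on the unit circle and are simple. -/
theorem stmt6 (d m : ℕ → ℝ) (R : ℕ → Polynomial ℂ)
    (hm : ∀ n, 1 ≤ n → 0 < m n ∧ m n < 1)
    (hd : ∀ n, 1 ≤ n → d (n + 1) = (1 - m n) * m (n + 1))
    (hR0 : R 0 = 1) (hR1 : R 1 = X + 1)
    (hrec : ∀ n, 1 ≤ n →
      R (n + 1) = (X + 1) * R n - C ((4 * d (n + 1) : ℝ) : ℂ) * (X * R (n - 1))) :
    ∀ n, ∀ z : ℂ, (R n).IsRoot z →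
      ‖z‖ = 1 ∧ Polynomial.rootMultiplicity z (R n) = 1 := by
  classical
  intro n z0 hroot
  rcases Nat.eq_zero_or_pos n with rfl | hn
  · rw [hR0] at hroot
    simp [IsRoot] at hroot
  obtain ⟨x, y, hxb, hyb, hxy, hfx, hfy⟩ := sp_pair d m hm hd n
  have hxdec : ∀ i, i+1 < n → x (i+1) < x i := fun i hi =>
    lt_trans (hxy (i+1) hi).1 (hxy i (by omega)).2
  have hxmono := step_anti x n hxdec
  set s : ℕ → ℝ := fun i => Real.sqrt (1 - (x i)^2) with hsdef
  set ζ : ℕ → ℂ := fun i => ((x i : ℝ) : ℂ) + ((s i : ℝ) : ℂ) * Complex.I with hzdef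
  set w : ℕ → ℂ := fun i => (ζ i)^2 with hwdef
  have hspos : ∀ i, i < n → 0 < s i := by
    intro i hi
    have := hxb i hi
    exact Real.sqrt_pos.mpr (by nlinarith [this.1, this.2])
  have hs2 : ∀ i, i < n → (s i)^2 = 1 - (x i)^2 := by
    intro i hi
    have := hxb i hi
    exact Real.sq_sqrt (by nlinarith [this.1, this.2])
  have hζne : ∀ i, i < n → ζ i ≠ 0 := by
    intro i hi hc
    have h1 : (ζ i).im = s i := by simp [hzdef]
    rw [hc] at h1
    simp only [Complex.zero_im] at h1
    exact (hspos i hi).ne' h1.symm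
  have hζabs : ∀ i, i < n → ‖ζ i‖ = 1 := by
    intro i hi
    have h1 : Complex.normSq (ζ i) = 1 := by
      simp [Complex.normSq_apply, hzdef]
      nlinarith [hs2 i hi]
    rw [Complex.norm_def, h1, Real.sqrt_one]
  have hζinv : ∀ i, i < n → (ζ i)⁻¹ = ((x i : ℝ) : ℂ) - ((s i : ℝ) : ℂ) * Complex.I := by
    intro i hi
    refine inv_eq_of_mul_eq_one_right ?_
    have h2 := hs2 i hi
    have h3 : ζ i * (((x i : ℝ) : ℂ) - ((s i : ℝ) : ℂ) * Complex.I)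
        = ((x i : ℝ) : ℂ)^2 - ((s i : ℝ) : ℂ)^2 * Complex.I^2 := by
      rw [hzdef]; ring
    rw [h3, Complex.I_sq]
    have h5 : (((x i) : ℝ) : ℂ)^2 + (((s i) : ℝ) : ℂ)^2 = 1 := by
      have h4 : (x i)^2 + (s i)^2 = 1 := by linarith
      exact_mod_cast congrArg (fun t : ℝ => (t : ℂ)) h4
    linear_combination h5
  have hmid : ∀ i, i < n → ((ζ i + (ζ i)⁻¹)/2) = ((x i : ℝ) : ℂ) := by
    intro i hi
    rw [hζinv i hi, hzdef]
    ring
  have hwroot : ∀ i, i < n → (R n).eval (w i) = 0 := by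
    intro i hi
    have ht := transfer d R hR0 hR1 hrec n (ζ i) (hζne i hi)
    simp only [hwdef]
    rw [ht, hmid i hi]
    have ha : (Polynomial.aeval ((x i : ℝ) : ℂ)) (sp d n)
        = (((sp d n).eval (x i) : ℝ) : ℂ) := by
      have := aeval_algebraMap_apply_eq_algebraMap_eval (R := ℝ) (A := ℂ) (x i) (sp d n)
      simpa using this
    have hev : (sp d n).eval (x i) = 0 := by
      rw [hfx, eval_mul, eval_prod]
      refine mul_eq_zero_of_right _ (Finset.prod_eq_zero (Finset.mem_range.mpr hi) ?_)
      simp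
    rw [ha, hev]
    simp
  have hwinj : ∀ i, i < n → ∀ j, j < n → w i = w j → i = j := by
    intro i hi j hj heq
    have hx : x i = x j := by
      refine winj_real (x i) (x j) (s i) (s j) (hspos i hi) (hspos j hj)
        (hs2 i hi) (hs2 j hj) ?_
      exact heq
    by_contra hne
    rcases Nat.lt_or_ge i j with h | h
    · exact absurd hx (ne_of_gt (hxmono i j h hj))
    · exact absurd hx (ne_of_lt (hxmono j i (by omega) hi))
  have hRd := R_deg d R hR0 hR1 hrec n
  have hdegR : (R n).natDegree = n :=
    le_antisymm hRd.1 (le_natDegree_of_ne_zero (by rw [hRd.2]; exact one_ne_zero))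
  have hlcR : (R n).leadingCoeff = 1 := by rw [leadingCoeff, hdegR, hRd.2]
  have hRne : R n ≠ 0 := by
    intro hc
    rw [hc] at hlcR
    simp at hlcR
  have hfactR : R n = ∏ i ∈ Finset.range n, (X - C (w i)) := by
    have := factor_of_roots (R n) n w hdegR hRne hwroot hwinj
    rw [hlcR] at this
    simpa using this
  have hz0 : ∃ i ∈ Finset.range n, z0 = w i := by
    have h0 : (R n).eval z0 = 0 := hroot
    rw [hfactR, eval_prod] at h0
    obtain ⟨i, hi, h1⟩ := Finset.prod_eq_zero_iff.mp h0
    refine ⟨i, hi, ?_⟩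
    simp only [eval_sub, eval_X, eval_C] at h1
    exact sub_eq_zero.mp h1
  obtain ⟨i, hi, rfl⟩ := hz0
  have hin : i < n := Finset.mem_range.mp hi
  constructor
  · simp only [hwdef]
    rw [norm_pow, hζabs i hin, one_pow]
  · rw [← Polynomial.count_roots]
    have himg : (∏ a ∈ (Finset.range n).image w, (X - C a : Polynomial ℂ))
        = ∏ j ∈ Finset.range n, (X - C (w j)) :=
      Finset.prod_image (fun a ha b hb hab =>
        hwinj a (Finset.mem_range.mp ha) b (Finset.mem_range.mp hb) hab)
    rw [hfactR, ← himg, Polynomial.roots_prod_X_sub_C]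
    exact Multiset.count_eq_one_of_mem (Finset.nodup _)
      (Finset.mem_val.mpr (Finset.mem_image_of_mem w hi))
end

section
/- Let φ_n(b;λ) = ((2b+1)_n/(b+1)_n)·₂F₁(−n, b+1; 2b+1; 1−λ) and φ*_n(b;λ) = λ^n · conj(φ_n(b; 1/conj(λ))) (the reversed polynomial). Then φ*_n(b;λ) = ((2b+1)_n/(b+1)_n)·₂F₁(−n, b; 2b+1; 1−λ) for b > −1/2, as an identity of polynomials. -/
/-- Terminating Gauss hypergeometric series `₂F₁(-n, b; c; x)` over `ℂ`. -/
noncomputable def hypC (n : ℕ) (b c x : ℂ) : ℂ :=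
  ∑ k ∈ Finset.range (n + 1),
    ((ascPochhammer ℂ k).eval (-(n : ℂ)) * (ascPochhammer ℂ k).eval b) /
      ((ascPochhammer ℂ k).eval c * (Nat.factorial k : ℂ)) * x ^ k

open Finset Polynomial
open scoped ComplexConjugate

noncomputable def pc (k : ℕ) (x : ℂ) : ℂ := (ascPochhammer ℂ k).eval x

lemma pc_succ_left (k : ℕ) (x : ℂ) : pc (k+1) x = x * pc k (x+1) := by
  unfold pc; rw [ascPochhammer_succ_left]; simp [eval_comp]

lemma pc_succ_right (k : ℕ) (x : ℂ) : pc (k+1) x = pc k x * (x + k) := by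
  unfold pc; exact ascPochhammer_succ_eval k x

lemma pc_zero (x : ℂ) : pc 0 x = 1 := by unfold pc; simp

lemma pc_conj (k : ℕ) (z : ℂ) : conj (pc k z) = pc k (conj z) := by
  unfold pc
  conv_rhs => rw [← ascPochhammer_map (starRingEnd ℂ) k]
  rw [eval_map, eval₂_at_apply]

lemma pc_ne_zero (k : ℕ) (x : ℝ) (hx : 0 < x) : pc k (x : ℂ) ≠ 0 := by
  have h : pc k (x : ℂ) = Complex.ofReal ((ascPochhammer ℝ k).eval x) := by
    unfold pc
    conv_lhs => rw [← ascPochhammer_map (algebraMap ℝ ℂ) k]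
    rw [eval_map]
    rw [show (x : ℂ) = algebraMap ℝ ℂ x from rfl, eval₂_at_apply]
    rfl
  rw [h]
  exact_mod_cast ne_of_gt (ascPochhammer_pos k x hx)

lemma pc_neg_nat (n k : ℕ) : pc k (-(n : ℂ)) = (-1)^k * (n.descFactorial k : ℂ) := by
  unfold pc
  rw [ascPochhammer_eval_neg_eq_descPochhammer, descPochhammer_eval_eq_descFactorial]

lemma pc_mul (k l : ℕ) (x : ℂ) : pc (k + l) x = pc k x * pc l (x + k) := by
  unfold pc
  rw [← ascPochhammer_mul]
  simp [eval_comp]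

lemma vand (β : ℂ) : ∀ (m : ℕ) (γ : ℂ),
    ∑ k ∈ Finset.range (m+1), ((-1:ℂ)^k * (m.choose k : ℂ)) * (pc k β * pc (m-k) (γ + k))
      = pc m (γ - β) := by
  intro m
  induction m with
  | zero => intro γ; simp [pc_zero]
  | succ m ih =>
    intro γ
    have step1 : ∑ k ∈ Finset.range (m+2), ((-1:ℂ)^k * ((m+1).choose k : ℂ)) * (pc k β * pc (m+1-k) (γ+k))
        = ∑ k ∈ Finset.range (m+1), ((-1:ℂ)^k * (m.choose k : ℂ)) * (pc k β * pc (m+1-k) (γ+k))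
          - ∑ k ∈ Finset.range (m+1), ((-1:ℂ)^k * (m.choose k : ℂ)) * (pc (k+1) β * pc (m-k) (γ+(k+1 : ℕ))) := by
      rw [Finset.sum_range_succ' (fun k => ((-1:ℂ)^k * ((m+1).choose k : ℂ)) * (pc k β * pc (m+1-k) (γ+k))) (m+1)]
      rw [Finset.sum_range_succ' (fun k => ((-1:ℂ)^k * (m.choose k : ℂ)) * (pc k β * pc (m+1-k) (γ+k))) m]
      have hext : ∑ i ∈ Finset.range m, ((-1:ℂ)^(i+1) * (m.choose (i+1) : ℂ)) * (pc (i+1) β * pc (m+1-(i+1)) (γ+(i+1 : ℕ)))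
          = ∑ i ∈ Finset.range (m+1), ((-1:ℂ)^(i+1) * (m.choose (i+1) : ℂ)) * (pc (i+1) β * pc (m+1-(i+1)) (γ+(i+1 : ℕ))) := by
        rw [Finset.sum_range_succ]
        simp [Nat.choose_succ_self]
      rw [hext]
      have hper : ∀ i ∈ Finset.range (m+1),
          ((-1:ℂ)^(i+1) * (((m+1).choose (i+1) : ℕ) : ℂ)) * (pc (i+1) β * pc (m+1-(i+1)) (γ+(i+1 : ℕ)))
          = ((-1:ℂ)^(i+1) * ((m.choose (i+1) : ℕ) : ℂ)) * (pc (i+1) β * pc (m+1-(i+1)) (γ+(i+1 : ℕ)))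
            - ((-1:ℂ)^i * ((m.choose i : ℕ) : ℂ)) * (pc (i+1) β * pc (m-i) (γ+(i+1 : ℕ))) := by
        intro i hi
        have : m+1-(i+1) = m - i := by omega
        rw [this, Nat.choose_succ_succ]
        push_cast
        ring
      have hmain : ∑ k ∈ Finset.range (m+1),
          ((-1:ℂ)^(k+1) * (((m+1).choose (k+1) : ℕ) : ℂ)) * (pc (k+1) β * pc (m+1-(k+1)) (γ+(k+1 : ℕ)))
          = ∑ i ∈ Finset.range (m+1), ((-1:ℂ)^(i+1) * ((m.choose (i+1) : ℕ) : ℂ)) * (pc (i+1) β * pc (m+1-(i+1)) (γ+(i+1 : ℕ)))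
            - ∑ k ∈ Finset.range (m+1), ((-1:ℂ)^k * ((m.choose k : ℕ) : ℂ)) * (pc (k+1) β * pc (m-k) (γ+(k+1 : ℕ))) := by
        rw [← Finset.sum_sub_distrib]
        exact Finset.sum_congr rfl hper
      rw [hmain]
      simp only [Nat.choose_zero_right]
      ring
    calc ∑ k ∈ Finset.range (m+1+1), ((-1:ℂ)^k * ((m+1).choose k : ℂ)) * (pc k β * pc (m+1-k) (γ+k))
        = ∑ k ∈ Finset.range (m+1),
            (((-1:ℂ)^k * (m.choose k : ℂ)) * (pc k β * pc (m+1-k) (γ+k))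
             - ((-1:ℂ)^k * (m.choose k : ℂ)) * (pc (k+1) β * pc (m-k) (γ+(k+1 : ℕ)))) := by
          rw [step1, Finset.sum_sub_distrib]
      _ = ∑ k ∈ Finset.range (m+1), (γ - β) * (((-1:ℂ)^k * (m.choose k : ℂ)) * (pc k β * pc (m-k) ((γ+1) + k))) := by
          refine Finset.sum_congr rfl fun k hk => ?_
          rw [Finset.mem_range] at hk
          have hk' : k ≤ m := Nat.lt_succ_iff.mp hk
          have h1 : pc (m+1-k) (γ + k) = (γ + k) * pc (m-k) ((γ + 1) + k) := by
            rw [show m+1-k = (m-k)+1 by omega, pc_succ_left]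
            congr 1
            ring
          have h2 : pc (k+1) β = pc k β * (β + k) := pc_succ_right k β
          have h3 : (γ + ((k:ℕ)+1 : ℕ) : ℂ) = (γ + 1) + k := by push_cast; ring
          rw [h1, h2, h3]
          ring
      _ = (γ - β) * pc m ((γ+1) - β) := by rw [← Finset.mul_sum, ih (γ+1)]
      _ = pc (m+1) (γ - β) := by
          rw [pc_succ_left]
          congr 1
          ring

lemma coeff_id (b : ℝ) (hb : b > -(1/2)) (n m : ℕ) (hm : m ≤ n) :
    ∑ k ∈ Finset.range (m+1),
        (pc k (-(n:ℂ)) * pc k ((b:ℂ)+1)) / (pc k (2*(b:ℂ)+1) * (Nat.factorial k : ℂ))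
          * (((n-k).choose (m-k) : ℕ) : ℂ)
      = (-1:ℂ)^m * ((pc m (-(n:ℂ)) * pc m (b:ℂ)) / (pc m (2*(b:ℂ)+1) * (Nat.factorial m : ℂ))) := by
  have hpos : (0:ℝ) < 2*b+1 := by linarith
  have hcast : ((2*b+1 : ℝ) : ℂ) = 2*(b:ℂ)+1 := by push_cast; ring
  have hγ : ∀ k : ℕ, pc k (2*(b:ℂ)+1) ≠ 0 := by
    intro k; rw [← hcast]; exact pc_ne_zero k _ hpos
  have hterm : ∀ k ∈ Finset.range (m+1),
      (pc k (-(n:ℂ)) * pc k ((b:ℂ)+1)) / (pc k (2*(b:ℂ)+1) * (Nat.factorial k : ℂ))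
          * (((n-k).choose (m-k) : ℕ) : ℂ)
        = ((n.choose m : ℂ) / pc m (2*(b:ℂ)+1))
            * (((-1:ℂ)^k * (m.choose k : ℂ)) * (pc k ((b:ℂ)+1) * pc (m-k) ((2*(b:ℂ)+1) + k))) := by
    intro k hk
    rw [Finset.mem_range] at hk
    have hk' : k ≤ m := Nat.lt_succ_iff.mp hk
    rw [pc_neg_nat]
    have hd : (n.descFactorial k : ℂ) = (Nat.factorial k : ℂ) * (n.choose k : ℂ) := by
      rw [Nat.descFactorial_eq_factorial_mul_choose]; push_cast; ring
    have hsplit : pc m (2*(b:ℂ)+1) = pc k (2*(b:ℂ)+1) * pc (m-k) ((2*(b:ℂ)+1) + k) := by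
      rw [← pc_mul, Nat.add_sub_cancel' hk']
    have hch : ((n.choose m : ℕ) : ℂ) * ((m.choose k : ℕ) : ℂ)
        = ((n.choose k : ℕ) : ℂ) * (((n-k).choose (m-k) : ℕ) : ℂ) := by
      rw [← Nat.cast_mul, ← Nat.cast_mul, Nat.choose_mul hk']
    have hfk : (Nat.factorial k : ℂ) ≠ 0 := by exact_mod_cast Nat.factorial_ne_zero k
    rw [hd]
    rw [div_mul_eq_mul_div, div_mul_eq_mul_div,
      div_eq_div_iff (mul_ne_zero (hγ k) hfk) (hγ m), hsplit]
    linear_combination ((-1:ℂ)^k * (Nat.factorial k : ℂ) * pc k (2*(b:ℂ)+1)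
      * pc (m-k) ((2*(b:ℂ)+1) + k) * pc k ((b:ℂ)+1)) * hch.symm
  rw [Finset.sum_congr rfl hterm, ← Finset.mul_sum, vand ((b:ℂ)+1) m (2*(b:ℂ)+1)]
  have hba : (2*(b:ℂ)+1) - ((b:ℂ)+1) = (b:ℂ) := by ring
  rw [hba, pc_neg_nat]
  have hd : (n.descFactorial m : ℂ) = (Nat.factorial m : ℂ) * (n.choose m : ℂ) := by
    rw [Nat.descFactorial_eq_factorial_mul_choose]; push_cast; ring
  rw [hd]
  have hfm : (Nat.factorial m : ℂ) ≠ 0 := by exact_mod_cast Nat.factorial_ne_zero m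
  have h1 : (-1:ℂ)^m * (-1:ℂ)^m = 1 := by
    rw [← pow_add, ← two_mul, pow_mul]; norm_num
  rw [← mul_div_assoc, div_mul_eq_mul_div,
    div_eq_div_iff (hγ m) (mul_ne_zero (hγ m) hfm)]
  linear_combination (-((n.choose m : ℂ) * pc m (b:ℂ) * (Nat.factorial m : ℂ) * pc m (2*(b:ℂ)+1))) * h1

lemma key (b : ℝ) (hb : b > -(1/2)) (n : ℕ) (t : ℂ) :
    ∑ k ∈ Finset.range (n+1),
        (pc k (-(n:ℂ)) * pc k ((b:ℂ)+1)) / (pc k (2*(b:ℂ)+1) * (Nat.factorial k : ℂ))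
          * ((-t)^k * (1-t)^(n-k))
      = ∑ m ∈ Finset.range (n+1),
        (pc m (-(n:ℂ)) * pc m (b:ℂ)) / (pc m (2*(b:ℂ)+1) * (Nat.factorial m : ℂ)) * t^m := by
  set A : ℕ → ℂ := fun k =>
    (pc k (-(n:ℂ)) * pc k ((b:ℂ)+1)) / (pc k (2*(b:ℂ)+1) * (Nat.factorial k : ℂ)) with hA
  calc ∑ k ∈ Finset.range (n+1), A k * ((-t)^k * (1-t)^(n-k))
      = ∑ k ∈ Finset.range (n+1), ∑ j ∈ Finset.range (n-k+1),
          A k * (-t)^(k+j) * (((n-k).choose j : ℕ) : ℂ) := by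
        refine Finset.sum_congr rfl fun k hk => ?_
        rw [show (1:ℂ) - t = -t + 1 by ring, add_pow, Finset.mul_sum, Finset.mul_sum]
        refine Finset.sum_congr rfl fun j hj => ?_
        rw [pow_add]
        ring_nf
    _ = ∑ p ∈ (Finset.range (n+1)).sigma (fun k => Finset.range (n-k+1)),
          A p.1 * (-t)^(p.1+p.2) * (((n-p.1).choose p.2 : ℕ) : ℂ) := by
        rw [Finset.sum_sigma']
    _ = ∑ p ∈ (Finset.range (n+1)).sigma (fun m => Finset.range (m+1)),
          A p.2 * (-t)^p.1 * (((n-p.2).choose (p.1-p.2) : ℕ) : ℂ) := by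
        refine Finset.sum_nbij' (fun p => ⟨p.1+p.2, p.1⟩) (fun p => ⟨p.2, p.1-p.2⟩) ?_ ?_ ?_ ?_ ?_
        · rintro ⟨k, j⟩ hp
          simp only [Finset.mem_sigma, Finset.mem_range] at hp ⊢
          omega
        · rintro ⟨m, k⟩ hp
          simp only [Finset.mem_sigma, Finset.mem_range] at hp ⊢
          omega
        · rintro ⟨k, j⟩ hp
          simp
        · rintro ⟨m, k⟩ hp
          simp only [Finset.mem_sigma, Finset.mem_range] at hp
          refine Sigma.ext ?_ (heq_of_eq ?_) <;> simp <;> omega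
        · rintro ⟨k, j⟩ hp
          simp only [Finset.mem_sigma, Finset.mem_range] at hp
          simp
    _ = ∑ m ∈ Finset.range (n+1), ∑ k ∈ Finset.range (m+1),
          A k * (-t)^m * (((n-k).choose (m-k) : ℕ) : ℂ) := by
        rw [Finset.sum_sigma]
    _ = ∑ m ∈ Finset.range (n+1),
        (pc m (-(n:ℂ)) * pc m (b:ℂ)) / (pc m (2*(b:ℂ)+1) * (Nat.factorial m : ℂ)) * t^m := by
        refine Finset.sum_congr rfl fun m hm => ?_
        rw [Finset.mem_range] at hm
        have hsum : ∑ k ∈ Finset.range (m+1), A k * (-t)^m * (((n-k).choose (m-k) : ℕ) : ℂ)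
            = (-t)^m * ∑ k ∈ Finset.range (m+1), A k * (((n-k).choose (m-k) : ℕ) : ℂ) := by
          rw [Finset.mul_sum]
          exact Finset.sum_congr rfl fun k _ => by ring
        rw [hsum, coeff_id b hb n m (Nat.lt_succ_iff.mp hm), neg_pow]
        have h1 : (-1:ℂ)^m * (-1:ℂ)^m = 1 := by
          rw [← pow_add, ← two_mul, pow_mul]; norm_num
        linear_combination (t^m * ((pc m (-(n:ℂ)) * pc m (b:ℂ)) / (pc m (2*(b:ℂ)+1) * (Nat.factorial m : ℂ)))) * h1

lemma conj_hypC (n : ℕ) (β γ x : ℂ) (hβ : conj β = β) (hγ : conj γ = γ) :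
    conj (hypC n β γ x) = hypC n β γ (conj x) := by
  unfold hypC
  rw [map_sum]
  refine Finset.sum_congr rfl fun k _ => ?_
  rw [map_mul, map_div₀, map_mul, map_mul, map_pow]
  have h1 : conj ((ascPochhammer ℂ k).eval (-(n:ℂ))) = (ascPochhammer ℂ k).eval (-(n:ℂ)) := by
    rw [show (ascPochhammer ℂ k).eval (-(n:ℂ)) = pc k (-(n:ℂ)) from rfl, pc_conj]
    simp
  have h2 : conj ((ascPochhammer ℂ k).eval β) = (ascPochhammer ℂ k).eval β := by
    rw [show (ascPochhammer ℂ k).eval β = pc k β from rfl, pc_conj, hβ]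
  have h3 : conj ((ascPochhammer ℂ k).eval γ) = (ascPochhammer ℂ k).eval γ := by
    rw [show (ascPochhammer ℂ k).eval γ = pc k γ from rfl, pc_conj, hγ]
  rw [h1, h2, h3]
  simp

/-- The reversed polynomial
`φ*_n(b;λ) = λ^n conj(φ_n(b;1/conj λ))` of the Szegő polynomial
`φ_n(b;λ) = ((2b+1)_n/(b+1)_n) ₂F₁(-n,b+1;2b+1;1-λ)` is
`((2b+1)_n/(b+1)_n) ₂F₁(-n,b;2b+1;1-λ)`. -/
theorem stmt15 (b : ℝ) (hb : b > -(1 / 2)) (n : ℕ) (φ : ℂ → ℂ)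
    (hφ : ∀ μ : ℂ, φ μ =
      (ascPochhammer ℂ n).eval (2 * (b : ℂ) + 1) /
          (ascPochhammer ℂ n).eval ((b : ℂ) + 1) *
        hypC n ((b : ℂ) + 1) (2 * (b : ℂ) + 1) (1 - μ)) :
    ∀ lam : ℂ, lam ≠ 0 →
      lam ^ n * (starRingEnd ℂ) (φ (1 / (starRingEnd ℂ) lam)) =
        (ascPochhammer ℂ n).eval (2 * (b : ℂ) + 1) /
            (ascPochhammer ℂ n).eval ((b : ℂ) + 1) *
          hypC n (b : ℂ) (2 * (b : ℂ) + 1) (1 - lam) := by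
  intro lam hlam
  have hb1 : conj ((b:ℂ)+1) = (b:ℂ)+1 := by simp
  have h2b : conj (2*(b:ℂ)+1) = 2*(b:ℂ)+1 := by
    rw [map_add, map_one, map_mul, Complex.conj_ofReal, map_ofNat]
  have hbb : conj ((b:ℂ)) = (b:ℂ) := Complex.conj_ofReal b
  rw [hφ, map_mul, map_div₀]
  rw [show (ascPochhammer ℂ n).eval (2*(b:ℂ)+1) = pc n (2*(b:ℂ)+1) from rfl,
      show (ascPochhammer ℂ n).eval ((b:ℂ)+1) = pc n ((b:ℂ)+1) from rfl,
      pc_conj, pc_conj, h2b, hb1]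
  rw [conj_hypC n _ _ _ hb1 h2b]
  have harg : conj (1 - 1/(starRingEnd ℂ) lam) = 1 - 1/lam := by
    rw [map_sub, map_one, map_div₀, map_one, Complex.conj_conj]
  rw [harg, mul_left_comm]
  congr 1
  have hkey := key b hb n (1 - lam)
  rw [show -(1-lam) = lam - 1 by ring, show (1:ℂ)-(1-lam) = lam by ring] at hkey
  simp only [pc] at hkey
  unfold hypC
  rw [Finset.mul_sum, ← hkey]
  refine Finset.sum_congr rfl fun k hk => ?_
  rw [Finset.mem_range] at hk
  have hk' : k ≤ n := Nat.lt_succ_iff.mp hk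
  have hlamk : (lam:ℂ)^k ≠ 0 := pow_ne_zero k hlam
  have hfrac : (1:ℂ) - 1/lam = (lam - 1)/lam := by field_simp
  rw [hfrac, div_pow]
  have hpow : lam^n = lam^(n-k) * lam^k := by
    rw [← pow_add]
    congr 1
    omega
  rw [hpow]
  have hcc : lam⁻¹^k * lam^k = 1 := by
    rw [← mul_pow, inv_mul_cancel₀ hlam, one_pow]
  field_simp
end
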